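/- Let A be an integrally closed domain with fraction field Q containing a root of T^4 + 4, let 0 ≠ a ∈ A and n ≥ 1 with char Q ∤ n. If T^d − a has no root in A for every divisor d > 1 of n, then A[T]/(T^n − a) is an integral domain with fraction field Q[T]/(T^n − a). -/

import Mathlib

open Polynomial IntermediateField AdjoinRoot

set_option linter.unusedVariables false

theorem my_X_pow_sub_C_irreducible {K : Type u} [Field K] (hi : ∃ i : K, i ^ 2 = -1)
    {n : ℕ} (hn : n ≠ 0) {a : K}
    (ha : ∀ p : ℕ, p.Prime → p ∣ n → ∀ b : K, b ^ p ≠ a) :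
    Irreducible (X ^ n - C a) := by
  induction n using induction_on_primes generalizing K a with
  | zero => exact absurd rfl hn
  | one => simpa using irreducible_X_sub_C a
  | prime_mul p m hp IH =>
    obtain ⟨i, hi2⟩ := hi
    rw [mul_comm]
    apply X_pow_mul_sub_C_irreducible
      (X_pow_sub_C_irreducible_of_prime hp (ha p hp (dvd_mul_right _ _)))
    intro E _ _ x hx
    have hint : IsIntegral K x := not_not.mp fun h ↦ by
      simpa only [degree_zero, degree_X_pow_sub_C hp.pos,
        WithBot.natCast_ne_bot] using congr_arg degree (hx.symm.trans (dif_neg h))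
    have hm : m ≠ 0 := by rintro rfl; exact hn (mul_zero p)
    apply IH ⟨algebraMap K _ i, by rw [← map_pow, hi2, map_neg, map_one]⟩ hm
    intro q hq hqm b hb
    have key : (Algebra.norm K b) ^ q = (-1) ^ (p + 1) * a := by
      rw [← map_pow, hb, ← adjoin.powerBasis_gen hint,
        Algebra.PowerBasis.norm_gen_eq_coeff_zero_minpoly]
      simp [minpoly_gen, hx, hp.ne_zero.symm, pow_succ]
    rcases hp.eq_two_or_odd' with hp2 | hpodd
    · subst hp2
      have key2 : (Algebra.norm K b) ^ q = -a := by rw [key]; ring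
      rcases hq.eq_two_or_odd' with hq2 | hqodd
      · subst hq2
        exact ha 2 hq (dvd_mul_right 2 m) (i * Algebra.norm K b)
          (by rw [mul_pow, hi2, key2]; ring)
      · exact ha q hq (dvd_mul_of_dvd_right hqm 2) (-(Algebra.norm K b))
          (by rw [hqodd.neg_pow, key2, neg_neg])
    · have key2 : (Algebra.norm K b) ^ q = a := by
        rw [key, hpodd.add_one.neg_one_pow, one_mul]
      exact ha q hq (dvd_mul_of_dvd_right hqm p) _ key2


/-- Let `A` be an integrally closed domain with fraction field `Q` containing a root of
`T⁴ + 4`, `0 ≠ a ∈ A`, `n ≥ 1` with `char Q ∤ n`. If `T^d - a` has no root in `A` for every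
divisor `d > 1` of `n`, then `A[T]/(Tⁿ - a)` is an integral domain with fraction field
`Q[T]/(Tⁿ - a)`. -/
theorem stmt_5 (A Q : Type*) [CommRing A] [IsDomain A] [Field Q] [Algebra A Q]
    [IsFractionRing A Q] [IsIntegrallyClosed A]
    (hy : ∃ y : Q, y ^ 4 = -4)
    (a : A) (ha : a ≠ 0) (n : ℕ) (hn : 0 < n) (hchar : ¬ (ringChar Q ∣ n))
    (hroot : ∀ d : ℕ, 1 < d → d ∣ n → ¬ ∃ x : A, x ^ d = a) :
    IsDomain (AdjoinRoot (X ^ n - C a)) ∧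
      Nonempty (FractionRing (AdjoinRoot (X ^ n - C a)) ≃+*
        AdjoinRoot (X ^ n - C (algebraMap A Q a))) := by
  have halg : Function.Injective (algebraMap A Q) := IsFractionRing.injective A Q
  set f : A[X] := X ^ n - C a with hf
  set f' : Q[X] := X ^ n - C (algebraMap A Q a) with hf'
  have hmonic : f.Monic := monic_X_pow_sub_C a hn.ne'
  have hmap : f.map (algebraMap A Q) = f' := by
    simp [hf, hf', Polynomial.map_sub, Polynomial.map_pow]
  -- square root of -1
  have hi : ∃ i : Q, i ^ 2 = -1 := by
    obtain ⟨y, hy4⟩ := hy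
    by_cases h2 : (2 : Q) = 0
    · exact ⟨1, by rw [one_pow]; linear_combination h2⟩
    · refine ⟨y ^ 2 / 2, ?_⟩
      field_simp
      linear_combination hy4
  -- no p-th roots in Q
  have ha' : ∀ p : ℕ, p.Prime → p ∣ n → ∀ b : Q, b ^ p ≠ algebraMap A Q a := by
    intro p hp hpn b hb
    have hbint : IsIntegral A b := by
      refine ⟨X ^ p - C a, monic_X_pow_sub_C a hp.ne_zero, ?_⟩
      simp [eval₂_sub, hb]
    obtain ⟨x, hx⟩ := IsIntegrallyClosed.isIntegral_iff.mp hbint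
    refine hroot p hp.one_lt hpn ⟨x, halg ?_⟩
    rw [map_pow, hx, hb]
  have hirr' : Irreducible f' := my_X_pow_sub_C_irreducible hi hn.ne' ha'
  haveI : Fact (Irreducible f') := ⟨hirr'⟩
  -- the map φ : A[X]/(f) → Q[X]/(f')
  have hev : f.eval₂ ((AdjoinRoot.of f').comp (algebraMap A Q)) (AdjoinRoot.root f') = 0 := by
    rw [hf]
    simp only [eval₂_sub, eval₂_pow, eval₂_X, eval₂_C, RingHom.coe_comp, Function.comp_apply]
    rw [root_X_pow_sub_C_pow n (algebraMap A Q a), sub_self]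
  set φ : AdjoinRoot f →+* AdjoinRoot f' :=
    AdjoinRoot.lift ((AdjoinRoot.of f').comp (algebraMap A Q)) (AdjoinRoot.root f') hev with hφ
  have hφmk : ∀ g : A[X], φ (AdjoinRoot.mk f g) = AdjoinRoot.mk f' (g.map (algebraMap A Q)) := by
    intro g
    rw [hφ, AdjoinRoot.lift_mk, ← AdjoinRoot.aeval_eq, aeval_def, eval₂_map,
      AdjoinRoot.algebraMap_eq]
  have hinj : Function.Injective φ := by
    rw [injective_iff_map_eq_zero]
    intro z hz
    obtain ⟨g, rfl⟩ := AdjoinRoot.mk_surjective z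
    rw [hφmk, AdjoinRoot.mk_eq_zero, ← hmap, map_dvd_map _ halg hmonic] at hz
    rw [AdjoinRoot.mk_eq_zero]
    exact hz
  have hdom : IsDomain (AdjoinRoot f) := hinj.isDomain φ
  haveI := hdom
  letI : Algebra (AdjoinRoot f) (AdjoinRoot f') := φ.toAlgebra
  have halgmap : ∀ z : AdjoinRoot f, algebraMap (AdjoinRoot f) (AdjoinRoot f') z = φ z :=
    fun _ => rfl
  haveI : IsFractionRing (AdjoinRoot f) (AdjoinRoot f') := by
    refine ⟨fun y => ?_, fun z => ?_, fun {x y} h => ?_⟩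
    · rw [halgmap, isUnit_iff_ne_zero]
      intro h0
      exact nonZeroDivisors.ne_zero y.2 (hinj (by rw [h0, map_zero]))
    · obtain ⟨g', rfl⟩ := AdjoinRoot.mk_surjective z
      obtain ⟨⟨c, hc0⟩, hc⟩ := IsLocalization.integerNormalization_map_to_map (nonZeroDivisors A) g'
      have hcne : AdjoinRoot.mk f (C c) ≠ 0 := by
        intro h0
        have := hφmk (C c)
        rw [h0, map_zero] at this
        have h1 : (AdjoinRoot.mk f' ((C c : A[X]).map (algebraMap A Q))) =
            algebraMap Q (AdjoinRoot f') (algebraMap A Q c) := by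
          rw [Polynomial.map_C, AdjoinRoot.algebraMap_eq, AdjoinRoot.mk_C]
        rw [h1] at this
        have h2 : algebraMap A Q c = 0 := by
          apply RingHom.injective (algebraMap Q (AdjoinRoot f'))
          rw [map_zero]; exact this.symm
        exact nonZeroDivisors.ne_zero hc0 (halg (by rw [h2, map_zero]))
      refine ⟨⟨AdjoinRoot.mk f (IsLocalization.integerNormalization (nonZeroDivisors A) g'),
        ⟨AdjoinRoot.mk f (C c), mem_nonZeroDivisors_of_ne_zero hcne⟩⟩, ?_⟩
      simp only [halgmap, hφmk]
      rw [hc, algebra_compatible_smul Q, Polynomial.smul_eq_C_mul, map_mul, Polynomial.map_C,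
        AdjoinRoot.mk_C]
      ring
    · exact ⟨1, by rw [hinj h]⟩
  exact ⟨hdom, ⟨(IsLocalization.algEquiv (nonZeroDivisors (AdjoinRoot f))
    (FractionRing (AdjoinRoot f)) (AdjoinRoot f')).toRingEquiv⟩⟩
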